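/- Let 𝒫 ⊆ ℝ^d be a symmetric set of vectors, let e ∈ ℝ^d be nonzero and b ≥ 0. Suppose that some p ∈ 𝒫 satisfies ⟨p,e⟩ ≠ 0 (so that, by symmetry of 𝒫, the scalar products ⟨p,e⟩ take positive, negative and zero values on 𝒫), and that the set {p ∈ 𝒫 : ⟨p,e⟩ = 0} spans the orthogonal complement of e in ℝ^d. Then b·z(e) = P(f_e), i.e., {λe : −b ≤ λ ≤ b} = {x ∈ ℝ^d : ⟨p,x⟩ ≤ b|⟨p,e⟩| for all p ∈ 𝒫}. -/

import Mathlib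

open scoped RealInnerProductSpace

/-- for a symmetric set of vectors `Pset` whose scalar products with `e`
take a nonzero value, and whose `e`-orthogonal part spans the orthogonal complement
of `e`, the segment `b·z(e)` equals `P(f_e)`. -/
theorem minkowski_voronoi_stmt3 {d : ℕ}
    (Pset : Set (EuclideanSpace ℝ (Fin d)))
    (hsym : ∀ p ∈ Pset, -p ∈ Pset)
    (e : EuclideanSpace ℝ (Fin d)) (he : e ≠ 0)
    (b : ℝ) (hb : 0 ≤ b)
    (hex : ∃ p ∈ Pset, ⟪p, e⟫ ≠ 0)
    (hperp : Submodule.span ℝ {p ∈ Pset | ⟪p, e⟫ = 0} =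
      (Submodule.span ℝ ({e} : Set (EuclideanSpace ℝ (Fin d))))ᗮ) :
    {x : EuclideanSpace ℝ (Fin d) | ∃ l : ℝ, -b ≤ l ∧ l ≤ b ∧ x = l • e} =
      {x : EuclideanSpace ℝ (Fin d) | ∀ p ∈ Pset, ⟪p, x⟫ ≤ b * |⟪p, e⟫|} := by
  ext x
  simp only [Set.mem_setOf_eq]
  constructor
  · rintro ⟨l, hl1, hl2, rfl⟩ p hp
    rw [real_inner_smul_right]
    calc l * ⟪p, e⟫ ≤ |l * ⟪p, e⟫| := le_abs_self _
      _ = |l| * |⟪p, e⟫| := abs_mul _ _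
      _ ≤ b * |⟪p, e⟫| := by
          apply mul_le_mul_of_nonneg_right _ (abs_nonneg _)
          exact abs_le.mpr ⟨hl1, hl2⟩
  · intro hx
    set K : Submodule ℝ (EuclideanSpace ℝ (Fin d)) :=
      Submodule.span ℝ ({e} : Set (EuclideanSpace ℝ (Fin d)))
    have hsplit := Submodule.exists_add_mem_mem_orthogonal (K := K) x
    obtain ⟨y, hy, w, hw, rfl⟩ := hsplit
    -- every p orthogonal to e is orthogonal to w
    have hpw : ∀ p ∈ {p ∈ Pset | ⟪p, e⟫ = 0}, ⟪p, w⟫ = 0 := by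
      rintro p ⟨hp, hpe⟩
      have hpK : p ∈ Kᗮ := by
        rw [← hperp]
        exact Submodule.subset_span ⟨hp, hpe⟩
      have hpy : ⟪p, y⟫ = 0 := by rw [real_inner_comm]; exact hpK y hy
      have h1 : ⟪p, y + w⟫ ≤ 0 := by
        have := hx p hp
        rwa [hpe, abs_zero, mul_zero] at this
      have h2 : (0:ℝ) ≤ ⟪p, y + w⟫ := by
        have := hx (-p) (hsym p hp)
        simp only [inner_neg_left, hpe, neg_zero, abs_zero, mul_zero, neg_nonpos] at this
        exact this
      have h3 : ⟪p, y + w⟫ = 0 := le_antisymm h1 h2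
      rw [inner_add_right, hpy, zero_add] at h3
      exact h3
    -- w is in the span of these p's and orthogonal to all of them, so w = 0
    have hww : ⟪w, w⟫ = 0 := by
      have hw' : w ∈ Submodule.span ℝ {p ∈ Pset | ⟪p, e⟫ = 0} := hperp ▸ hw
      have : ∀ v ∈ Submodule.span ℝ {p ∈ Pset | ⟪p, e⟫ = 0}, ⟪v, w⟫ = 0 := by
        intro v hv
        induction hv using Submodule.span_induction with
        | mem p hp => exact hpw p hp
        | zero => simp
        | add a b _ _ ha hb => rw [inner_add_left, ha, hb, add_zero]
        | smul c a _ ha => rw [real_inner_smul_left, ha, mul_zero]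
      exact this w hw'
    have hw0 : w = 0 := by
      rwa [real_inner_self_eq_norm_sq, pow_eq_zero_iff (two_ne_zero), norm_eq_zero] at hww
    subst hw0
    rw [add_zero]
    -- y ∈ span {e}, so y = l • e
    obtain ⟨l, rfl⟩ := Submodule.mem_span_singleton.mp hy
    rw [add_zero] at hx
    refine ⟨l, ?_, ?_, rfl⟩ <;>
    · obtain ⟨p, hp, hpe⟩ := hex
      have h1 := hx p hp
      have h2 := hx (-p) (hsym p hp)
      rw [real_inner_smul_right] at h1
      rw [inner_neg_left, inner_neg_left, real_inner_smul_right, abs_neg, neg_le] at h2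
      have habs : |l| * |⟪p, e⟫| ≤ b * |⟪p, e⟫| := by
        rw [← abs_mul]
        rcases abs_cases (l * ⟪p, e⟫) with ⟨h, _⟩ | ⟨h, _⟩
        · rw [h]; exact h1
        · rw [h]; linarith
      have hl : |l| ≤ b :=
        le_of_mul_le_mul_right (by simpa using habs) (abs_pos.mpr hpe)
      first
      | exact (abs_le.mp hl).1
      | exact (abs_le.mp hl).2
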